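/- The trace of the Hessian of ℓ at (W1, W2), computed as the sum of the Hessian quadratic form over the orthonormal basis {(e_{ij}, 0)} ∪ {(0, e_{ij})} of ℝ^{d×d} × ℝ^{d×d} (where e_{ij} are the standard matrix units), equals 2d ‖W2‖_F² + 2d ‖W1‖_F². Consequently, for a > 0 the trace of the Hessian at the scaled point (a⁻¹ W1, a W2) equals 2 a² d ‖W2‖_F² + 2 a⁻² d ‖W1‖_F², which tends to infinity as a → ∞ whenever W2 ≠ 0, even though ℓ(a⁻¹ W1, a W2) = ℓ(W1, W2) for all a > 0. -/

import Mathlib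

open Matrix Filter

section helpers

lemma quad_iter (a b c : ℝ) : iteratedDeriv 2 (fun t : ℝ => a * t ^ 2 + b * t + c) 0 = 2 * a := by
  have h1 : deriv (fun t : ℝ => a * t ^ 2 + b * t + c) = fun t => 2 * a * t + b := by
    funext t
    have h : HasDerivAt (fun t : ℝ => a * t ^ 2 + b * t + c) (2 * a * t + b) t := by
      have := (((hasDerivAt_pow 2 t).const_mul a).add ((hasDerivAt_id t).const_mul b)).add_const c
      exact this.congr_deriv (by simp; ring)
    exact h.deriv
  have h2 : deriv (fun t : ℝ => 2 * a * t + b) = fun _ => 2 * a := by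
    funext t
    have h : HasDerivAt (fun t : ℝ => 2 * a * t + b) (2 * a) t := by
      have := ((hasDerivAt_id t).const_mul (2 * a)).add_const b
      exact this.congr_deriv (by ring)
    exact h.deriv
  rw [show (2:ℕ) = 1 + 1 from rfl, iteratedDeriv_succ, iteratedDeriv_one, h1, h2]

end helpers

/-- Squared Frobenius norm. -/
def froSq {d : ℕ} (A : Matrix (Fin d) (Fin d) ℝ) : ℝ :=
  ∑ i, ∑ j, (A i j) ^ 2

/-- The matrix-factorization loss ℓ(A, B) = ‖A B − M‖_F². -/
def loss {d : ℕ} (M A B : Matrix (Fin d) (Fin d) ℝ) : ℝ :=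
  froSq (A * B - M)

/-- The Hessian quadratic form of ℓ at `(A, B)` in direction `(E1, E2)`:
`Q_{(A,B)}(E1, E2) = (d²/dt²)|_{t=0} ℓ(A + t E1, B + t E2)`. -/
noncomputable def hessQ {d : ℕ} (M A B E1 E2 : Matrix (Fin d) (Fin d) ℝ) : ℝ :=
  iteratedDeriv 2 (fun t : ℝ => loss M (A + t • E1) (B + t • E2)) 0

/-- The trace of the Hessian of ℓ at `(A, B)`, computed as the sum of the Hessian
quadratic form over the orthonormal basis `{(e_ij, 0)} ∪ {(0, e_ij)}` of
`ℝ^{d×d} × ℝ^{d×d}`, where `e_ij` are the standard matrix units. -/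
noncomputable def hessTrace {d : ℕ} (M A B : Matrix (Fin d) (Fin d) ℝ) : ℝ :=
  (∑ i, ∑ j, hessQ M A B (Matrix.single i j (1 : ℝ)) 0) +
  (∑ i, ∑ j, hessQ M A B 0 (Matrix.single i j (1 : ℝ)))

lemma froSq_add_smul {d : ℕ} (X Y : Matrix (Fin d) (Fin d) ℝ) (t : ℝ) :
    froSq (X + t • Y) = froSq Y * t ^ 2 + (2 * ∑ i, ∑ j, X i j * Y i j) * t + froSq X := by
  simp only [froSq, Matrix.add_apply, Matrix.smul_apply, smul_eq_mul, Finset.mul_sum,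
    Finset.sum_mul, ← Finset.sum_add_distrib]
  refine Finset.sum_congr rfl fun i _ => Finset.sum_congr rfl fun j _ => by ring

lemma iter2_froSq {d : ℕ} (X Y : Matrix (Fin d) (Fin d) ℝ) :
    iteratedDeriv 2 (fun t : ℝ => froSq (X + t • Y)) 0 = 2 * froSq Y := by
  have : (fun t : ℝ => froSq (X + t • Y)) =
      fun t => froSq Y * t ^ 2 + (2 * ∑ i, ∑ j, X i j * Y i j) * t + froSq X := by
    funext t; exact froSq_add_smul X Y t
  rw [this, quad_iter]

lemma hessQ_left {d : ℕ} (M A B E : Matrix (Fin d) (Fin d) ℝ) :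
    hessQ M A B E 0 = 2 * froSq (E * B) := by
  have : (fun t : ℝ => loss M (A + t • E) (B + t • (0 : Matrix (Fin d) (Fin d) ℝ))) =
      fun t : ℝ => froSq ((A * B - M) + t • (E * B)) := by
    funext t
    simp only [loss, smul_zero, add_zero, add_mul, smul_mul_assoc]
    congr 1
    abel
  rw [hessQ, this, iter2_froSq]

lemma hessQ_right {d : ℕ} (M A B E : Matrix (Fin d) (Fin d) ℝ) :
    hessQ M A B 0 E = 2 * froSq (A * E) := by
  have : (fun t : ℝ => loss M (A + t • (0 : Matrix (Fin d) (Fin d) ℝ)) (B + t • E)) =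
      fun t : ℝ => froSq ((A * B - M) + t • (A * E)) := by
    funext t
    simp only [loss, smul_zero, add_zero, mul_add, mul_smul_comm]
    congr 1
    abel
  rw [hessQ, this, iter2_froSq]

lemma froSq_std_mul {d : ℕ} (B : Matrix (Fin d) (Fin d) ℝ) (k l : Fin d) :
    froSq (Matrix.single k l (1 : ℝ) * B) = ∑ j, B l j ^ 2 := by
  simp [froSq, Matrix.mul_apply, Matrix.single, Matrix.of_apply, ite_and,
    Finset.sum_ite_eq, Finset.sum_ite_eq', sq, ite_mul]

lemma froSq_mul_std {d : ℕ} (A : Matrix (Fin d) (Fin d) ℝ) (k l : Fin d) :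
    froSq (A * Matrix.single k l (1 : ℝ)) = ∑ i, A i k ^ 2 := by
  simp [froSq, Matrix.mul_apply, Matrix.single, Matrix.of_apply, ite_and,
    Finset.sum_ite_eq, Finset.sum_ite_eq', sq, ite_mul, mul_ite]

lemma hessTrace_eq {d : ℕ} (M A B : Matrix (Fin d) (Fin d) ℝ) :
    hessTrace M A B = 2 * d * froSq B + 2 * d * froSq A := by
  unfold hessTrace
  have e1 : (∑ k : Fin d, ∑ l : Fin d, hessQ M A B (Matrix.single k l 1) 0)
      = 2 * d * froSq B := by
    simp only [hessQ_left, froSq_std_mul, ← Finset.mul_sum, Finset.sum_const,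
      Finset.card_univ, Fintype.card_fin, nsmul_eq_mul]
    rw [froSq]; ring
  have e2 : (∑ k : Fin d, ∑ l : Fin d, hessQ M A B 0 (Matrix.single k l 1))
      = 2 * d * froSq A := by
    simp only [hessQ_right, froSq_mul_std, Finset.sum_const, Finset.card_univ,
      Fintype.card_fin, nsmul_eq_mul]
    have : froSq A = ∑ k : Fin d, ∑ i : Fin d, A i k ^ 2 := by
      rw [froSq, Finset.sum_comm]
    rw [this, Finset.mul_sum]
    refine Finset.sum_congr rfl fun k _ => by ring
  rw [e1, e2]

lemma froSq_smul {d : ℕ} (c : ℝ) (A : Matrix (Fin d) (Fin d) ℝ) :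
    froSq (c • A) = c ^ 2 * froSq A := by
  simp [froSq, Matrix.smul_apply, smul_eq_mul, mul_pow, Finset.mul_sum]

lemma froSq_nonneg {d : ℕ} (A : Matrix (Fin d) (Fin d) ℝ) : 0 ≤ froSq A :=
  Finset.sum_nonneg fun _ _ => Finset.sum_nonneg fun _ _ => sq_nonneg _

lemma froSq_pos {d : ℕ} {A : Matrix (Fin d) (Fin d) ℝ} (h : A ≠ 0) : 0 < froSq A := by
  have hne : ∃ i j, A i j ≠ 0 := by
    by_contra hc
    push_neg at hc
    exact h (Matrix.ext fun i j => hc i j)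
  obtain ⟨i, j, hij⟩ := hne
  have h1 : (A i j) ^ 2 ≤ ∑ j', (A i j') ^ 2 :=
    Finset.single_le_sum (f := fun j' => (A i j') ^ 2) (fun _ _ => sq_nonneg _)
      (Finset.mem_univ j)
  have h2 : (∑ j', (A i j') ^ 2) ≤ froSq A :=
    Finset.single_le_sum (f := fun i' => ∑ j', (A i' j') ^ 2)
      (fun _ _ => Finset.sum_nonneg fun _ _ => sq_nonneg _) (Finset.mem_univ i)
  have h0 : 0 < (A i j) ^ 2 := by positivity
  exact lt_of_lt_of_le h0 (h1.trans h2)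

theorem hess_trace_scaling (d : ℕ) (hd : 0 < d) (M W1 W2 : Matrix (Fin d) (Fin d) ℝ) :
    hessTrace M W1 W2 = 2 * d * froSq W2 + 2 * d * froSq W1 ∧
    (∀ a : ℝ, 0 < a →
      hessTrace M (a⁻¹ • W1) (a • W2) =
        2 * a ^ 2 * d * froSq W2 + 2 * (a ^ 2)⁻¹ * d * froSq W1) ∧
    (W2 ≠ 0 →
      Tendsto (fun a : ℝ => hessTrace M (a⁻¹ • W1) (a • W2)) atTop atTop) ∧
    (∀ a : ℝ, 0 < a → loss M (a⁻¹ • W1) (a • W2) = loss M W1 W2) := by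
  have key : ∀ a : ℝ, hessTrace M (a⁻¹ • W1) (a • W2) =
      2 * a ^ 2 * d * froSq W2 + 2 * (a⁻¹) ^ 2 * d * froSq W1 := by
    intro a
    rw [hessTrace_eq, froSq_smul, froSq_smul]; ring
  refine ⟨hessTrace_eq M W1 W2, fun a ha => by rw [key a, inv_pow], ?_, ?_⟩
  · intro hW2
    have hC : 0 < froSq W2 := froSq_pos hW2
    have hd' : (0:ℝ) < d := Nat.cast_pos.mpr hd
    have hpos : 0 < 2 * (d : ℝ) * froSq W2 := by positivity
    have hlow : ∀ᶠ a : ℝ in atTop,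
        2 * (d : ℝ) * froSq W2 * a ^ 2 ≤ hessTrace M (a⁻¹ • W1) (a • W2) := by
      filter_upwards [eventually_ge_atTop (1 : ℝ)] with a ha
      rw [key a]
      have : 0 ≤ 2 * (a⁻¹) ^ 2 * d * froSq W1 := by
        have := froSq_nonneg W1
        positivity
      nlinarith [froSq_pos hW2]
    refine tendsto_atTop_mono' atTop hlow ?_
    exact (tendsto_pow_atTop two_ne_zero).const_mul_atTop hpos
  · intro a ha
    have h : (a⁻¹ • W1) * (a • W2) = W1 * W2 := by
      rw [smul_mul_assoc, mul_smul_comm, smul_smul, inv_mul_cancel₀ ha.ne', one_smul]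
    rw [loss, h, loss]
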